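/- For each ray r in the output S of the MOD-SSR algorithm, there exists a segment ν_r (the critical segment for r) such that N(ν_r) ⊆ T_r at termination, where N(ν_r) is the set of all input rays intersecting ν_r. -/
import Mathlib


attribute [local instance] Classical.propDecidable

/-- A leftward-directed horizontal ray, given by its right endpoint `(x, y)`:
the point set `{(x', y) : x' ≤ x}`. -/
structure Ray where
  x : ℝ
  y : ℝ

/-- A vertical segment with `x`-coordinate `x` and `y`-range `[lo, hi]`. -/
structure VSeg where
  x : ℝ
  lo : ℝ
  hi : ℝ

/-- A leftward-directed ray intersects a vertical segment iff the segment's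
`x`-coordinate is at most the ray's right endpoint and the ray's height lies
in the segment's `y`-range. -/
def hits (r : Ray) (v : VSeg) : Prop :=
  v.x ≤ r.x ∧ v.lo ≤ r.y ∧ r.y ≤ v.hi

/-- A ray `r` of the surviving set `Rset` is critical if some surviving segment
intersects `r` and no other surviving ray. -/
def critical (Rset : Finset Ray) (Vset : Finset VSeg) (r : Ray) : Prop :=
  r ∈ Rset ∧ ∃ v ∈ Vset, hits r v ∧ ∀ r' ∈ Rset, hits r' v → r' = r

/-- `r'` lies just above `r` within the set `D` of rays. -/
def justAbove (D : Finset Ray) (r r' : Ray) : Prop :=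
  r ∈ D ∧ r' ∈ D ∧ r.y < r'.y ∧ ∀ r'' ∈ D, ¬ (r.y < r''.y ∧ r''.y < r'.y)

/-- An execution trace of the MOD-SSR token-passing algorithm on the SSR instance
`(R, V)`.  `Rs i, Vs i, Ss i, Tok i` are the surviving rays, surviving segments,
heuristic solution and tokens at the end of iteration `i`; `pivot i` is the ray
with smallest right-endpoint `x`-coordinate that passes its token in iteration `i`. -/
structure ModSSRTrace (R : Finset Ray) (V : Finset VSeg) where
  steps : ℕ
  Rs : ℕ → Finset Ray
  Vs : ℕ → Finset VSeg
  Ss : ℕ → Finset Ray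
  Tok : ℕ → Ray → Finset Ray
  pivot : ℕ → Ray
  init_R : Rs 0 = R
  init_V : Vs 0 = V
  init_S : Ss 0 = ∅
  init_T : ∀ r, Tok 0 r = {r}
  running : ∀ i < steps, Vs i ≠ ∅
  /-- step (a): collect all rays critical after the previous iteration. -/
  S_step : ∀ i, 1 ≤ i → i ≤ steps →
    Ss i = Ss (i-1) ∪ (Rs (i-1)).filter (fun r => critical (Rs (i-1)) (Vs (i-1)) r)
  /-- step (b): delete all segments intersecting some solution ray. -/
  V_step : ∀ i, 1 ≤ i → i ≤ steps →
    Vs i = (Vs (i-1)).filter (fun v => ∀ r ∈ Ss i, ¬ hits r v)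
  /-- step (c): the pivot is a surviving non-solution ray of smallest right-endpoint
  `x`-coordinate. -/
  pivot_mem : ∀ i, 1 ≤ i → i ≤ steps → pivot i ∈ Rs (i-1) \ Ss i
  pivot_min : ∀ i, 1 ≤ i → i ≤ steps → ∀ r ∈ Rs (i-1) \ Ss i, (pivot i).x ≤ r.x
  /-- token passing: each label `x` in the pivot's token migrates to a neighbour
  (just above / just below in `Rs (i-1) \ Ss i`) whenever some surviving segment
  intersects `x`, the pivot and that neighbour; then the pivot's token is emptied. -/
  Tok_step : ∀ i, 1 ≤ i → i ≤ steps → ∀ r' : Ray,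
    Tok i r' =
      if r' = pivot i then ∅
      else if justAbove (Rs (i-1) \ Ss i) (pivot i) r'
              ∨ justAbove (Rs (i-1) \ Ss i) r' (pivot i) then
        Tok (i-1) r' ∪ (Tok (i-1) (pivot i)).filter
          (fun x => ∃ v ∈ Vs i, hits x v ∧ hits (pivot i) v ∧ hits r' v)
      else Tok (i-1) r'
  /-- deletion of the pivot and the solution rays. -/
  R_step : ∀ i, 1 ≤ i → i ≤ steps →
    Rs i = (Rs (i-1) \ Ss i).erase (pivot i)
  /-- termination: no segment is left. -/
  term : Vs steps = ∅

namespace ModSSRTrace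

variable {R : Finset Ray} {V : Finset VSeg} (t : ModSSRTrace R V)

lemma Vs_sub : ∀ i, i ≤ t.steps → t.Vs i ⊆ V := by
  intro i
  induction i with
  | zero => intro _; rw [t.init_V]
  | succ n ih =>
    intro h
    have h1 : t.Vs (n+1) ⊆ t.Vs n := by
      rw [t.V_step (n+1) (by omega) h]
      exact Finset.filter_subset _ _
    exact h1.trans (ih (by omega))

lemma Rs_sub : ∀ i, i ≤ t.steps → t.Rs i ⊆ R := by
  intro i
  induction i with
  | zero => intro _; rw [t.init_R]
  | succ n ih =>
    intro h
    have h1 : t.Rs (n+1) ⊆ t.Rs n := by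
      rw [t.R_step (n+1) (by omega) h]
      exact (Finset.erase_subset _ _).trans (Finset.sdiff_subset)
    exact h1.trans (ih (by omega))

lemma Ss_mono : ∀ j, j ≤ t.steps → ∀ i, i ≤ j → t.Ss i ⊆ t.Ss j := by
  intro j
  induction j with
  | zero =>
    intro _ i hi
    have : i = 0 := by omega
    subst this; exact subset_rfl
  | succ n ih =>
    intro h i hi
    rcases Nat.lt_or_ge i (n+1) with hlt | hge
    · have h1 : t.Ss n ⊆ t.Ss (n+1) := by
        rw [t.S_step (n+1) (by omega) h]
        exact Finset.subset_union_left
      exact (ih (by omega) i (by omega)).trans h1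
    · have : i = n + 1 := by omega
      subst this; exact subset_rfl

lemma Tok_mono_step : ∀ i, 1 ≤ i → i ≤ t.steps → ∀ r, r ≠ t.pivot i →
    t.Tok (i-1) r ⊆ t.Tok i r := by
  intro i h1 h2 r hr
  rw [t.Tok_step i h1 h2 r, if_neg hr]
  split
  · exact Finset.subset_union_left
  · exact subset_rfl

lemma Tok_pres : ∀ j, j ≤ t.steps → ∀ i, i ≤ j → ∀ r, r ∈ t.Ss i →
    t.Tok i r ⊆ t.Tok j r := by
  intro j
  induction j with
  | zero => intro _ i hi r _; interval_cases i; exact subset_rfl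
  | succ n ih =>
    intro h i hi r hrS
    rcases Nat.lt_or_ge i (n+1) with hlt | hge
    · have hS : r ∈ t.Ss (n+1) := t.Ss_mono (n+1) h i (by omega) hrS
      have hp : r ≠ t.pivot (n+1) := by
        intro he
        have := t.pivot_mem (n+1) (by omega) h
        rw [Finset.mem_sdiff] at this
        exact this.2 (he ▸ hS)
      exact (ih (by omega) i (by omega) r hrS).trans
        (t.Tok_mono_step (n+1) (by omega) h r hp)
    · have : i = n + 1 := by omega
      subst this; exact subset_rfl

end ModSSRTrace

/-- Key geometric lemma: among the rays of `D` hitting `v`, if `p` has minimal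
`x` and `q ≠ p` also hits `v`, then some neighbour of `p` in `D` hits `v`. -/
lemma exists_justAbove_hit (D : Finset Ray) (v : VSeg)
    (hdisj : ∀ a ∈ D, ∀ b ∈ D, a ≠ b → a.y ≠ b.y)
    (p q : Ray) (hp : p ∈ D) (hq : q ∈ D) (hqp : q ≠ p)
    (hpv : hits p v) (hqv : hits q v)
    (hmin : ∀ r ∈ D, p.x ≤ r.x) :
    ∃ m ∈ D, m ≠ p ∧ hits m v ∧ (justAbove D p m ∨ justAbove D m p) := by
  have hy : q.y ≠ p.y := hdisj q hq p hp hqp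
  rcases hy.lt_or_gt with hlt | hlt
  · -- q below p : take the max-y ray in D with q.y ≤ y < p.y
    set s := D.filter (fun r => q.y ≤ r.y ∧ r.y < p.y) with hs
    have hqs : q ∈ s := by
      rw [hs, Finset.mem_filter]; exact ⟨hq, le_refl _, hlt⟩
    obtain ⟨m, hms, hmax⟩ := s.exists_max_image (fun r => r.y) ⟨q, hqs⟩
    rw [hs, Finset.mem_filter] at hms
    obtain ⟨hmD, hmy1, hmy2⟩ := hms
    have hmp : m ≠ p := fun he => absurd (he ▸ hmy2) (lt_irrefl _)
    refine ⟨m, hmD, hmp, ⟨hpv.1.trans (hmin m hmD), hqv.2.1.trans hmy1, hmy2.le.trans hpv.2.2⟩,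
      Or.inr ⟨hmD, hp, hmy2, ?_⟩⟩
    intro r hr ⟨h1, h2⟩
    have hrs : r ∈ s := by
      rw [hs, Finset.mem_filter]; exact ⟨hr, hmy1.trans h1.le, h2⟩
    exact absurd (hmax r hrs) (not_le.mpr h1)
  · -- q above p : take the min-y ray in D with p.y < y ≤ q.y
    set s := D.filter (fun r => p.y < r.y ∧ r.y ≤ q.y) with hs
    have hqs : q ∈ s := by
      rw [hs, Finset.mem_filter]; exact ⟨hq, hlt, le_refl _⟩
    obtain ⟨m, hms, hmin'⟩ := s.exists_min_image (fun r => r.y) ⟨q, hqs⟩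
    rw [hs, Finset.mem_filter] at hms
    obtain ⟨hmD, hmy1, hmy2⟩ := hms
    have hmp : m ≠ p := fun he => absurd (he ▸ hmy1) (lt_irrefl _)
    refine ⟨m, hmD, hmp, ⟨hpv.1.trans (hmin m hmD), hpv.2.1.trans hmy1.le, hmy2.trans hqv.2.2⟩,
      Or.inl ⟨hp, hmD, hmy1, ?_⟩⟩
    intro r hr ⟨h1, h2⟩
    have hrs : r ∈ s := by
      rw [hs, Finset.mem_filter]; exact ⟨hr, h1, h2.le.trans hmy2⟩
    exact absurd (hmin' r hrs) (not_le.mpr h2)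

/-- The token invariant: every original ray hitting a surviving segment has its
label in the token of some surviving ray hitting that segment. -/
lemma token_invariant {R : Finset Ray} {V : Finset VSeg}
    (hRdisj : ∀ r ∈ R, ∀ r' ∈ R, r ≠ r' → r.y ≠ r'.y)
    (t : ModSSRTrace R V) :
    ∀ i, i ≤ t.steps → ∀ v ∈ t.Vs i, ∀ x ∈ R, hits x v →
      ∃ r', r' ∈ t.Rs i ∧ hits r' v ∧ x ∈ t.Tok i r' := by
  intro i
  induction i with
  | zero =>
    intro _ v _ x hx hxv
    exact ⟨x, by rw [t.init_R]; exact hx, hxv, by rw [t.init_T]; exact Finset.mem_singleton_self x⟩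
  | succ n ih =>
    intro h v hv x hx hxv
    have h1 : (1:ℕ) ≤ n + 1 := by omega
    have hvfilter := (t.V_step (n+1) h1 h) ▸ hv
    rw [Finset.mem_filter] at hvfilter
    obtain ⟨hv', hnos⟩ := hvfilter
    obtain ⟨r', hr'R, hr'v, hx'⟩ := ih (by omega) v hv' x hx hxv
    by_cases hrp : r' = t.pivot (n+1)
    · -- the witness is the pivot: pass to a neighbour
      have hpmem := t.pivot_mem (n+1) h1 h
      rw [Finset.mem_sdiff] at hpmem
      have hpv : hits (t.pivot (n+1)) v := hrp ▸ hr'v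
      -- there is another surviving ray hitting v (else the pivot would be critical)
      have hq : ∃ q, q ∈ t.Rs n ∧ hits q v ∧ q ≠ t.pivot (n+1) := by
        by_contra hcon
        push_neg at hcon
        have hcrit : critical (t.Rs n) (t.Vs n) (t.pivot (n+1)) :=
          ⟨hpmem.1, v, hv', hpv, fun r'' h'' hh'' => hcon r'' h'' hh''⟩
        have : t.pivot (n+1) ∈ t.Ss (n+1) := by
          rw [t.S_step (n+1) h1 h]
          exact Finset.mem_union_right _ (Finset.mem_filter.mpr ⟨hpmem.1, hcrit⟩)
        exact hpmem.2 this
      obtain ⟨q, hqR, hqv, hqp⟩ := hq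
      have hqS : q ∉ t.Ss (n+1) := fun hmem => hnos q hmem hqv
      have hpD : t.pivot (n+1) ∈ t.Rs n \ t.Ss (n+1) := Finset.mem_sdiff.mpr hpmem
      have hqD : q ∈ t.Rs n \ t.Ss (n+1) := Finset.mem_sdiff.mpr ⟨hqR, hqS⟩
      have hdisjD : ∀ a ∈ t.Rs n \ t.Ss (n+1), ∀ b ∈ t.Rs n \ t.Ss (n+1),
          a ≠ b → a.y ≠ b.y := by
        intro a ha b hb
        have hDR : t.Rs n \ t.Ss (n+1) ⊆ R :=
          (Finset.sdiff_subset).trans (t.Rs_sub n (by omega))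
        exact hRdisj a (hDR ha) b (hDR hb)
      have hminD : ∀ r'' ∈ t.Rs n \ t.Ss (n+1), (t.pivot (n+1)).x ≤ r''.x :=
        t.pivot_min (n+1) h1 h
      obtain ⟨m, hmD, hmp, hmv, hside⟩ :=
        exists_justAbove_hit (t.Rs n \ t.Ss (n+1)) v hdisjD (t.pivot (n+1)) q
          hpD hqD hqp hpv hqv hminD
      refine ⟨m, ?_, hmv, ?_⟩
      · rw [t.R_step (n+1) h1 h]
        exact Finset.mem_erase.mpr ⟨hmp, hmD⟩
      · have hts := t.Tok_step (n+1) h1 h m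
        simp only [Nat.add_sub_cancel] at hts
        rw [hts, if_neg hmp, if_pos hside]
        refine Finset.mem_union_right _ (Finset.mem_filter.mpr ⟨hrp ▸ hx', ?_⟩)
        exact ⟨v, hv, hxv, hpv, hmv⟩
    · -- the witness survives
      have hr'S : r' ∉ t.Ss (n+1) := fun hmem => hnos r' hmem hr'v
      refine ⟨r', ?_, hr'v, ?_⟩
      · rw [t.R_step (n+1) h1 h]
        exact Finset.mem_erase.mpr ⟨hrp, Finset.mem_sdiff.mpr ⟨hr'R, hr'S⟩⟩
      · exact t.Tok_mono_step (n+1) h1 h r' hrp hx'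

/-- Observation 3: for each ray `r` of the solution output by MOD-SSR,
there is a critical segment `ν_r ∈ V` intersecting `r` such that every input ray
intersecting `ν_r` belongs to the token `T_r` at termination. -/
theorem modSSR_critical_segment (R : Finset Ray) (V : Finset VSeg)
    (hVok : ∀ v ∈ V, v.lo ≤ v.hi)
    (hRdisj : ∀ r ∈ R, ∀ r' ∈ R, r ≠ r' → r.y ≠ r'.y)
    (hVdisj : ∀ v ∈ V, ∀ w ∈ V, v ≠ w → v.x ≠ w.x)
    (hfeas : ∀ v ∈ V, ∃ r ∈ R, hits r v)
    (t : ModSSRTrace R V)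
    (r : Ray) (hr : r ∈ t.Ss t.steps) :
    ∃ ν ∈ V, hits r ν ∧ ∀ r'' ∈ R, hits r'' ν → r'' ∈ t.Tok t.steps r := by
  -- find the first iteration where r enters the solution
  have hex : ∃ i, r ∈ t.Ss i := ⟨t.steps, hr⟩
  classical
  set i := Nat.find hex with hidef
  have hiS : r ∈ t.Ss i := Nat.find_spec hex
  have hile : i ≤ t.steps := Nat.find_min' hex hr
  have hi1 : 1 ≤ i := by
    rcases Nat.eq_zero_or_pos i with h0 | h
    · exfalso; rw [h0, t.init_S] at hiS; exact absurd hiS (Finset.notMem_empty r)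
    · exact h
  have hnot : r ∉ t.Ss (i-1) := Nat.find_min hex (by omega)
  have hcrit : critical (t.Rs (i-1)) (t.Vs (i-1)) r := by
    rw [t.S_step i hi1 hile] at hiS
    rcases Finset.mem_union.mp hiS with h | h
    · exact absurd h hnot
    · exact (Finset.mem_filter.mp h).2
  obtain ⟨hrR, ν, hνV, hrν, huniq⟩ := hcrit
  refine ⟨ν, t.Vs_sub (i-1) (by omega) hνV, hrν, ?_⟩
  intro x hx hxν
  have hinv := token_invariant hRdisj t (i-1) (by omega) ν hνV x hx hxν
  obtain ⟨r', hr'R, hr'ν, hx'⟩ := hinv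
  have heq : r' = r := huniq r' hr'R hr'ν
  rw [heq] at hx'
  have step1 : t.Tok (i-1) r ⊆ t.Tok i r := by
    apply t.Tok_mono_step i hi1 hile
    intro he
    have := t.pivot_mem i hi1 hile
    rw [Finset.mem_sdiff] at this
    exact this.2 (he ▸ Nat.find_spec hex)
  exact t.Tok_pres t.steps (le_refl _) i hile r (Nat.find_spec hex) (step1 hx')
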